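/- On the n-node ring graph, if the set T of y-players is a disjoint union of p≥1 maximal arcs (contiguous chains) T_1,…,T_p with 0<|T|<n, then Φ^S(a^T) = (1+α)(n−|T|−p) + (|T|−p) + Σ_{j=1}^p |S∩T_j|. -/

import Mathlib

open Finset

/-- Pairwise coordination payoff: `true` is action `x`, `false` is action `y`. -/
def coordPayoff (α : ℝ) : Bool → Bool → ℝ
  | true, true => 1 + α
  | false, false => 1
  | _, _ => 0

/-- Edge-based potential `Φ^S`. -/
def phi {V : Type*} [Fintype V] [DecidableEq V] (G : SimpleGraph V) [DecidableRel G.Adj]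
    (α : ℝ) (S : Finset V) (a : V → Bool) : ℝ :=
  (∑ e ∈ G.edgeFinset,
    Sym2.lift ⟨fun i j => coordPayoff α (a i) (a j),
      fun i j => by show coordPayoff α (a i) (a j) = coordPayoff α (a j) (a i); cases a i <;> cases a j <;> rfl⟩ e)
  + ∑ i ∈ S, (if a i = false then (1 : ℝ) else 0)

/-- The ring (cycle) graph on `ZMod n`. -/
def ringGraph (n : ℕ) : SimpleGraph (ZMod n) where
  Adj i j := i ≠ j ∧ (j = i + 1 ∨ i = j + 1)
  symm := by constructor; intro i j h; exact ⟨h.1.symm, h.2.symm⟩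
  loopless := by constructor; intro i h; exact h.1 rfl

instance (n : ℕ) : DecidableRel (ringGraph n).Adj :=
  fun i j => inferInstanceAs (Decidable (i ≠ j ∧ (j = i + 1 ∨ i = j + 1)))

/-- The arc `[i, i+t] = {i, i+1, …, i+t}` (indices mod `n`). -/
def arc (n : ℕ) (i : ZMod n) (t : ℕ) : Finset (ZMod n) :=
  (Finset.range (t + 1)).image fun m : ℕ => i + (m : ZMod n)

lemma mem_arc {n : ℕ} {s i : ZMod n} {t : ℕ} :
    i ∈ arc n s t ↔ ∃ m, m ≤ t ∧ s + (m : ZMod n) = i := by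
  simp [arc, Nat.lt_succ_iff]

lemma ring_one_ne {n : ℕ} (hn : 3 ≤ n) : (1 : ZMod n) ≠ 0 := by
  intro h
  have h1 : (n : ℕ) ∣ 1 := (ZMod.natCast_eq_zero_iff 1 n).mp (by exact_mod_cast h)
  have := Nat.le_of_dvd one_pos h1
  omega

lemma ring_two_ne {n : ℕ} (hn : 3 ≤ n) : (2 : ZMod n) ≠ 0 := by
  intro h
  have h2 : (n : ℕ) ∣ 2 := (ZMod.natCast_eq_zero_iff 2 n).mp (by exact_mod_cast h)
  have := Nat.le_of_dvd two_pos h2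
  omega

lemma edge_eq {n : ℕ} [NeZero n] (hn : 3 ≤ n) :
    (ringGraph n).edgeFinset = Finset.univ.image (fun i : ZMod n => s(i, i+1)) := by
  ext e
  induction e using Sym2.inductionOn with
  | hf i j =>
    simp only [SimpleGraph.mem_edgeFinset, SimpleGraph.mem_edgeSet, Finset.mem_image,
      Finset.mem_univ, true_and]
    constructor
    · rintro ⟨hne, h | h⟩
      · exact ⟨i, by rw [h]⟩
      · exact ⟨j, by rw [h, Sym2.eq_swap]⟩
    · rintro ⟨k, hk⟩
      replace hk := (Sym2.mk_eq_mk_iff (p := (k, k+1)) (q := (i, j))).mp hk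
      show (ringGraph n).Adj i j
      rcases hk with h | h
      · rw [Prod.mk.injEq] at h
        obtain ⟨h1, h2⟩ := h
        refine ⟨?_, Or.inl (by rw [← h1, ← h2])⟩
        rw [← h1, ← h2]
        intro hc
        exact ring_one_ne hn (by linear_combination -hc)
      · rw [Prod.swap_prod_mk, Prod.mk.injEq] at h
        obtain ⟨h1, h2⟩ := h
        refine ⟨?_, Or.inr (by rw [← h1, ← h2])⟩
        rw [← h1, ← h2]
        intro hc
        exact ring_one_ne hn (by linear_combination hc)

lemma edge_inj {n : ℕ} (hn : 3 ≤ n) :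
    Function.Injective (fun i : ZMod n => s(i, i+1)) := by
  intro i j h
  replace h := (Sym2.mk_eq_mk_iff (p := (i, i+1)) (q := (j, j+1))).mp h
  simp only [Sym2.mk_eq_mk_iff, Prod.mk.injEq, Prod.swap_prod_mk] at h
  rcases h with ⟨h1, _⟩ | ⟨h1, h2⟩
  · exact h1
  · exact absurd (by linear_combination h2 - h1 : (2:ZMod n) = 0) (ring_two_ne hn)


/-- Potential of a ring profile whose `y`-set `T` is a disjoint union of `p` maximal arcs:
`Φ^S(a^T) = (1+α)(n−|T|−p) + (|T|−p) + Σ_j |S∩T_j|`. -/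
theorem ring_phi_arcs {n : ℕ} [NeZero n] (hn : 3 ≤ n) (α : ℝ) (S T : Finset (ZMod n))
    (p : ℕ) (hp : 1 ≤ p) (st : Fin p → ZMod n) (len : Fin p → ℕ)
    (hcover : T = Finset.univ.biUnion fun j => arc n (st j) (len j))
    (hdisj : ∀ j j' : Fin p, j ≠ j' →
      Disjoint (arc n (st j) (len j)) (arc n (st j') (len j')))
    (hmaxarc : ∀ j : Fin p, st j - 1 ∉ T ∧ st j + (len j : ZMod n) + 1 ∉ T)
    (hT0 : 0 < T.card) (hTn : T.card < n) :
    phi (ringGraph n) α S (fun i => if i ∈ T then false else true)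
      = (1 + α) * ((n : ℝ) - (T.card : ℝ) - (p : ℝ)) + ((T.card : ℝ) - (p : ℝ))
        + ∑ j : Fin p, ((S ∩ arc n (st j) (len j)).card : ℝ) := by
  have hsub : ∀ j : Fin p, arc n (st j) (len j) ⊆ T := by
    intro j
    rw [hcover]
    exact Finset.subset_biUnion_of_mem (fun j => arc n (st j) (len j)) (Finset.mem_univ j)
  have hstT : ∀ j : Fin p, st j ∈ T := by
    intro j
    apply hsub j
    rw [mem_arc]
    exact ⟨0, Nat.zero_le _, by simp⟩
  have hendT : ∀ j : Fin p, st j + (len j : ZMod n) ∈ T := by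
    intro j
    apply hsub j
    rw [mem_arc]
    exact ⟨len j, le_refl _, rfl⟩
  -- right endpoints
  have hR : T.filter (fun i => i + 1 ∉ T) =
      Finset.image (fun j : Fin p => st j + (len j : ZMod n)) Finset.univ := by
    ext i
    simp only [Finset.mem_filter, Finset.mem_image, Finset.mem_univ, true_and]
    constructor
    · rintro ⟨hiT, hi1⟩
      rw [hcover, Finset.mem_biUnion] at hiT
      obtain ⟨j, -, hij⟩ := hiT
      rw [mem_arc] at hij
      obtain ⟨m, hm, rfl⟩ := hij
      refine ⟨j, ?_⟩
      have hml : m = len j := by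
        by_contra hne
        have hlt : m + 1 ≤ len j := by omega
        apply hi1
        apply hsub j
        rw [mem_arc]
        exact ⟨m + 1, hlt, by push_cast; ring⟩
      rw [hml]
    · rintro ⟨j, rfl⟩
      exact ⟨hendT j, (hmaxarc j).2⟩
  have hRcard : (T.filter (fun i => i + 1 ∉ T)).card = p := by
    rw [hR, Finset.card_image_of_injective _ ?_, Finset.card_univ, Fintype.card_fin]
    intro j j' h
    simp only at h
    by_contra hne
    have h1 : st j + (len j : ZMod n) ∈ arc n (st j) (len j) :=
      mem_arc.mpr ⟨len j, le_refl _, rfl⟩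
    have h2 : st j + (len j : ZMod n) ∈ arc n (st j') (len j') :=
      mem_arc.mpr ⟨len j', le_refl _, h.symm⟩
    exact Finset.disjoint_left.mp (hdisj j j' hne) h1 h2
  -- left endpoints
  have hL : Tᶜ.filter (fun i => i + 1 ∈ T) =
      Finset.image (fun j : Fin p => st j - 1) Finset.univ := by
    ext i
    simp only [Finset.mem_filter, Finset.mem_image, Finset.mem_univ, true_and,
      Finset.mem_compl]
    constructor
    · rintro ⟨hiT, hi1⟩
      rw [hcover, Finset.mem_biUnion] at hi1
      obtain ⟨j, -, hij⟩ := hi1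
      rw [mem_arc] at hij
      obtain ⟨m, hm, hmeq⟩ := hij
      refine ⟨j, ?_⟩
      have hm0 : m = 0 := by
        by_contra hne
        apply hiT
        apply hsub j
        rw [mem_arc]
        refine ⟨m - 1, by omega, ?_⟩
        have : ((m - 1 : ℕ) : ZMod n) = (m : ZMod n) - 1 := by
          have : m - 1 + 1 = m := by omega
          calc ((m - 1 : ℕ) : ZMod n) = ((m - 1 + 1 : ℕ) : ZMod n) - 1 := by push_cast; ring
            _ = (m : ZMod n) - 1 := by rw [this]
        rw [this]
        linear_combination hmeq
      rw [hm0] at hmeq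
      push_cast at hmeq
      linear_combination hmeq
    · rintro ⟨j, rfl⟩
      refine ⟨(hmaxarc j).1, ?_⟩
      have : st j - 1 + 1 = st j := by ring
      rw [this]
      exact hstT j
  have hLcard : (Tᶜ.filter (fun i => i + 1 ∈ T)).card = p := by
    rw [hL, Finset.card_image_of_injective _ ?_, Finset.card_univ, Fintype.card_fin]
    intro j j' h
    have hst : st j = st j' := by
      have h' : st j - 1 = st j' - 1 := h
      linear_combination h'
    by_contra hne
    have h1 : st j ∈ arc n (st j) (len j) := mem_arc.mpr ⟨0, Nat.zero_le _, by simp⟩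
    have h2 : st j ∈ arc n (st j') (len j') := mem_arc.mpr ⟨0, Nat.zero_le _, by simp [hst]⟩
    exact Finset.disjoint_left.mp (hdisj j j' hne) h1 h2
  -- counts
  have hBcount : (T.filter (fun i => i + 1 ∈ T)).card + p = T.card := by
    rw [← hRcard]
    exact Finset.card_filter_add_card_filter_not (fun i => i + 1 ∈ T)
  have hTc : Tᶜ.card = n - T.card := by
    rw [Finset.card_compl, ZMod.card]
  have hAcount : (Tᶜ.filter (fun i => i + 1 ∉ T)).card + p = n - T.card := by
    rw [← hLcard, ← hTc, add_comm]
    exact Finset.card_filter_add_card_filter_not (fun i => i + 1 ∈ T)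
  -- edge sum
  rw [phi, edge_eq hn, Finset.sum_image (fun x _ y _ h => edge_inj hn h)]
  simp only [Sym2.lift_mk]
  have hpt : ∀ i : ZMod n,
      coordPayoff α (if i ∈ T then false else true) (if i + 1 ∈ T then false else true)
      = (1 + α) * (if i ∈ Tᶜ.filter (fun i => i + 1 ∉ T) then (1:ℝ) else 0)
        + (if i ∈ T.filter (fun i => i + 1 ∈ T) then (1:ℝ) else 0) := by
    intro i
    by_cases hi : i ∈ T <;> by_cases hi1 : i + 1 ∈ T <;>
      simp [coordPayoff, hi, hi1]
  have hedge : ∑ i : ZMod n,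
      coordPayoff α (if i ∈ T then false else true) (if i + 1 ∈ T then false else true)
      = (1 + α) * ((Tᶜ.filter (fun i => i + 1 ∉ T)).card : ℝ)
        + ((T.filter (fun i => i + 1 ∈ T)).card : ℝ) := by
    rw [Finset.sum_congr rfl (fun i _ => hpt i), Finset.sum_add_distrib, ← Finset.mul_sum]
    congr 1
    · congr 1
      rw [Finset.sum_ite_mem, Finset.univ_inter, Finset.sum_const, nsmul_eq_mul, mul_one]
    · rw [Finset.sum_ite_mem, Finset.univ_inter, Finset.sum_const, nsmul_eq_mul, mul_one]
  rw [hedge]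
  -- S sum
  have hSsum : ∑ i ∈ S, (if (if i ∈ T then false else true) = false then (1:ℝ) else 0)
      = ∑ j : Fin p, ((S ∩ arc n (st j) (len j)).card : ℝ) := by
    have h1 : ∀ i ∈ S, (if (if i ∈ T then false else true) = false then (1:ℝ) else 0)
        = if i ∈ T then (1:ℝ) else 0 := by
      intro i _
      by_cases hi : i ∈ T <;> simp [hi]
    rw [Finset.sum_congr rfl h1, Finset.sum_boole]
    have h2 : S.filter (fun i => i ∈ T) = S ∩ T := Finset.filter_mem_eq_inter
    have h3 : S ∩ T = Finset.univ.biUnion (fun j => S ∩ arc n (st j) (len j)) := by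
      ext i
      simp only [Finset.mem_inter, hcover, Finset.mem_biUnion, Finset.mem_univ, true_and]
      tauto
    rw [h2, h3, Finset.card_biUnion, Nat.cast_sum]
    intro j _ j' _ hne
    exact (hdisj j j' hne).mono Finset.inter_subset_right Finset.inter_subset_right
  rw [hSsum]
  have hle : T.card ≤ n := le_of_lt hTn
  have e1 : ((Tᶜ.filter (fun i => i + 1 ∉ T)).card : ℝ) = (n : ℝ) - T.card - p := by
    have := hAcount
    have h4 : ((Tᶜ.filter (fun i => i + 1 ∉ T)).card + p : ℕ) = n - T.card := this
    have := congrArg (fun k : ℕ => (k : ℝ)) h4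
    push_cast [Nat.cast_sub hle] at this
    linarith
  have e2 : ((T.filter (fun i => i + 1 ∈ T)).card : ℝ) = (T.card : ℝ) - p := by
    have := congrArg (fun k : ℕ => (k : ℝ)) hBcount
    push_cast at this
    linarith
  rw [e1, e2]
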